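/- A Hausdorff paracompact quasi-local metric space (Z, 𝔔) is induced by a metric: there exists a metric D on Z such that the family {(Z, D)} represents the quasi-local metric 𝔔, i.e., {(Z, D)} together with any representative {(Z_i, d_i)}_{i∈I} ∈ 𝔔 forms a cover of Z by quasi-locally equal metric spaces. -/

import Mathlib

open Set Topology

private lemma min_one_tri (d13 d12 d23 : ℝ) (h12 : 0 ≤ d12) (h23 : 0 ≤ d23)
    (h : d13 ≤ d12 + d23) : min d13 1 ≤ min d12 1 + min d23 1 := by
  rcases le_or_gt 1 d12 with h1 | h1
  · have : (0:ℝ) ≤ min d23 1 := le_min h23 zero_le_one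
    calc min d13 1 ≤ 1 := min_le_right _ _
    _ = min d12 1 + 0 := by rw [min_eq_right h1]; ring
    _ ≤ _ := by linarith
  rcases le_or_gt 1 d23 with h2 | h2
  · have : (0:ℝ) ≤ min d12 1 := le_min h12 zero_le_one
    calc min d13 1 ≤ 1 := min_le_right _ _
    _ = 0 + min d23 1 := by rw [min_eq_right h2]; ring
    _ ≤ _ := by linarith
  · rw [min_eq_left h1.le, min_eq_left h2.le]
    exact (min_le_left _ _).trans h

private lemma cone_tri (a b c E F G : ℝ) (ha : 0 ≤ a) (hb : 0 ≤ b) (hc : 0 ≤ c)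
    (hE1 : E ≤ 1) (hF0 : 0 ≤ F) (hG0 : 0 ≤ G) (hEFG : E ≤ F + G) :
    |a - c| + min a c * E ≤ |a - b| + min a b * F + (|b - c| + min b c * G) := by
  by_cases hb2 : min a c ≤ b
  · have h1 : min a c ≤ min a b := le_min (min_le_left a c) hb2
    have h2 : min a c ≤ min b c := le_min hb2 (min_le_right a c)
    have hm : 0 ≤ min a c := le_min ha hc
    have k1 := mul_le_mul_of_nonneg_left hEFG hm
    have k2 := mul_le_mul_of_nonneg_right h1 hF0
    have k3 := mul_le_mul_of_nonneg_right h2 hG0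
    have k4 := abs_sub_le a b c
    nlinarith
  · push_neg at hb2
    have hba : b < a := lt_of_lt_of_le hb2 (min_le_left a c)
    have hbc : b < c := lt_of_lt_of_le hb2 (min_le_right a c)
    rw [min_eq_right hba.le, min_eq_left hbc.le,
      abs_of_pos (sub_pos.2 hba), abs_of_neg (sub_neg.2 hbc)]
    have habc : |a - c| = a + c - 2 * min a c := by
      rcases le_total a c with h | h
      · rw [min_eq_left h, abs_of_nonpos (by linarith)]; ring
      · rw [min_eq_right h, abs_of_nonneg (by linarith)]; ring
    have k1 := mul_le_mul_of_nonneg_left hEFG hb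
    have k2 : (min a c - b) * E ≤ (min a c - b) * 2 :=
      mul_le_mul_of_nonneg_left (hE1.trans one_le_two) (by linarith)
    nlinarith

section QLAux

variable {Z : Type*} {ι : Type*}

/-- The cone-type pseudodistance attached to one chart. -/
private def qlRho (φ : ι → Z → ℝ) (di : ι → Z → Z → ℝ) (i : ι) (x y : Z) : ℝ :=
  |φ i x - φ i y| + min (φ i x) (φ i y) * min (di i x y) 1

/-- The glued global distance function. -/
private noncomputable def qlD [DecidableEq ι] (φ : ι → Z → ℝ) (di : ι → Z → Z → ℝ)
    (hfin : ∀ x : Z, {i | φ i x ≠ 0}.Finite) (x y : Z) : ℝ :=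
  ∑ i ∈ (hfin x).toFinset ∪ (hfin y).toFinset, qlRho φ di i x y

variable {Zi : ι → Set Z} {di : ι → Z → Z → ℝ} {φ : ι → Z → ℝ}

private lemma ql_min0 (hφnn : ∀ i (x : Z), 0 ≤ φ i x)
    (hφ0 : ∀ i x, x ∉ Zi i → φ i x = 0) {i : ι} {x y : Z}
    (h : x ∉ Zi i ∨ y ∉ Zi i) : min (φ i x) (φ i y) = 0 := by
  rcases h with h | h
  · rw [hφ0 i x h]; exact min_eq_left (hφnn i y)
  · rw [hφ0 i y h]; exact min_eq_right (hφnn i x)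

private lemma qlRho_nonneg (hφnn : ∀ i (x : Z), 0 ≤ φ i x)
    (hφ0 : ∀ i x, x ∉ Zi i → φ i x = 0)
    (hnonneg : ∀ i, ∀ x ∈ Zi i, ∀ y ∈ Zi i, 0 ≤ di i x y) (i : ι) (x y : Z) :
    0 ≤ qlRho φ di i x y := by
  unfold qlRho
  by_cases hx : x ∈ Zi i
  · by_cases hy : y ∈ Zi i
    · exact add_nonneg (abs_nonneg _) (mul_nonneg (le_min (hφnn i x) (hφnn i y))
        (le_min (hnonneg i x hx y hy) zero_le_one))
    · rw [ql_min0 hφnn hφ0 (Or.inr hy), zero_mul, add_zero]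
      exact abs_nonneg _
  · rw [ql_min0 hφnn hφ0 (Or.inl hx), zero_mul, add_zero]
    exact abs_nonneg _

private lemma qlRho_prod_le (hφnn : ∀ i (x : Z), 0 ≤ φ i x)
    (hφ0 : ∀ i x, x ∉ Zi i → φ i x = 0) (i : ι) (x y : Z) :
    min (φ i x) (φ i y) * min (di i x y) 1 ≤ min (φ i x) (φ i y) := by
  by_cases hx : x ∈ Zi i
  · by_cases hy : y ∈ Zi i
    · exact mul_le_of_le_one_right (le_min (hφnn i x) (hφnn i y)) (min_le_right _ _)
    · rw [ql_min0 hφnn hφ0 (Or.inr hy), zero_mul]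
  · rw [ql_min0 hφnn hφ0 (Or.inl hx), zero_mul]

private lemma qlRho_le (hφnn : ∀ i (x : Z), 0 ≤ φ i x)
    (hφ0 : ∀ i x, x ∉ Zi i → φ i x = 0) (i : ι) (x y : Z) :
    qlRho φ di i x y ≤ φ i x + φ i y := by
  have key : |φ i x - φ i y| + min (φ i x) (φ i y) ≤ φ i x + φ i y := by
    rcases le_total (φ i x) (φ i y) with h | h
    · rw [min_eq_left h, abs_of_nonpos (sub_nonpos.2 h)]
      linarith [hφnn i x]
    · rw [min_eq_right h, abs_of_nonneg (sub_nonneg.2 h)]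
      linarith [hφnn i y]
  have h2 := qlRho_prod_le (Zi := Zi) (di := di) hφnn hφ0 i x y
  unfold qlRho
  linarith

private lemma qlRho_symm (hφnn : ∀ i (x : Z), 0 ≤ φ i x)
    (hφ0 : ∀ i x, x ∉ Zi i → φ i x = 0)
    (hsymm : ∀ i, ∀ x ∈ Zi i, ∀ y ∈ Zi i, di i x y = di i y x) (i : ι) (x y : Z) :
    qlRho φ di i x y = qlRho φ di i y x := by
  unfold qlRho
  rw [abs_sub_comm, min_comm (φ i x) (φ i y)]
  by_cases hx : x ∈ Zi i
  · by_cases hy : y ∈ Zi i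
    · rw [hsymm i x hx y hy]
    · rw [ql_min0 hφnn hφ0 (Or.inl hy)]; simp
  · rw [ql_min0 hφnn hφ0 (Or.inr hx)]; simp

private lemma qlRho_self (hφ0 : ∀ i x, x ∉ Zi i → φ i x = 0)
    (hzero : ∀ i, ∀ x ∈ Zi i, ∀ y ∈ Zi i, (di i x y = 0 ↔ x = y)) (i : ι) (x : Z) :
    qlRho φ di i x x = 0 := by
  unfold qlRho
  rw [sub_self, abs_zero, zero_add, min_self]
  by_cases hx : x ∈ Zi i
  · rw [(hzero i x hx x hx).2 rfl, min_eq_left zero_le_one, mul_zero]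
  · rw [hφ0 i x hx, zero_mul]

private lemma qlRho_eq_zero {i : ι} {x y : Z} (hx : φ i x = 0) (hy : φ i y = 0) :
    qlRho φ di i x y = 0 := by
  unfold qlRho
  rw [hx, hy, sub_self, abs_zero, min_self, zero_mul, add_zero]

private lemma qlRho_tri (hφnn : ∀ i (x : Z), 0 ≤ φ i x)
    (hφ0 : ∀ i x, x ∉ Zi i → φ i x = 0)
    (hnonneg : ∀ i, ∀ x ∈ Zi i, ∀ y ∈ Zi i, 0 ≤ di i x y)
    (htri : ∀ i, ∀ x ∈ Zi i, ∀ y ∈ Zi i, ∀ z ∈ Zi i, di i x z ≤ di i x y + di i y z)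
    (i : ι) (x y z : Z) :
    qlRho φ di i x z ≤ qlRho φ di i x y + qlRho φ di i y z := by
  by_cases hy : y ∈ Zi i
  · by_cases hx : x ∈ Zi i
    · by_cases hz : z ∈ Zi i
      · exact cone_tri (φ i x) (φ i y) (φ i z) _ _ _ (hφnn i x) (hφnn i y)
          (hφnn i z) (min_le_right _ _)
          (le_min (hnonneg i x hx y hy) zero_le_one)
          (le_min (hnonneg i y hy z hz) zero_le_one)
          (min_one_tri _ _ _ (hnonneg i x hx y hy) (hnonneg i y hy z hz)
            (htri i x hx y hy z hz))
      · have hc : φ i z = 0 := hφ0 i z hz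
        have e1 : min (φ i x) (φ i z) * min (di i x z) 1 = 0 := by
          rw [ql_min0 hφnn hφ0 (Or.inr hz), zero_mul]
        have e2 : min (φ i y) (φ i z) * min (di i y z) 1 = 0 := by
          rw [ql_min0 hφnn hφ0 (Or.inr hz), zero_mul]
        have h2 : 0 ≤ min (φ i x) (φ i y) * min (di i x y) 1 :=
          mul_nonneg (le_min (hφnn i x) (hφnn i y))
            (le_min (hnonneg i x hx y hy) zero_le_one)
        have h3 : φ i x - φ i y ≤ |φ i x - φ i y| := le_abs_self _
        unfold qlRho
        rw [e1, e2, hc, add_zero, add_zero, sub_zero, sub_zero,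
          abs_of_nonneg (hφnn i x)]
        linarith [le_abs_self (φ i y)]
    · have ha : φ i x = 0 := hφ0 i x hx
      have e1 : min (φ i x) (φ i z) * min (di i x z) 1 = 0 := by
        rw [ql_min0 hφnn hφ0 (Or.inl hx), zero_mul]
      have e2 : min (φ i x) (φ i y) * min (di i x y) 1 = 0 := by
        rw [ql_min0 hφnn hφ0 (Or.inl hx), zero_mul]
      have h7 : 0 ≤ min (φ i y) (φ i z) * min (di i y z) 1 := by
        by_cases hz : z ∈ Zi i
        · exact mul_nonneg (le_min (hφnn i y) (hφnn i z))
            (le_min (hnonneg i y hy z hz) zero_le_one)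
        · rw [ql_min0 hφnn hφ0 (Or.inr hz), zero_mul]
      have h3 : φ i z - φ i y ≤ |φ i y - φ i z| := by
        rw [abs_sub_comm]; exact le_abs_self _
      unfold qlRho
      rw [e1, e2, ha, add_zero, add_zero, zero_sub, zero_sub, abs_neg, abs_neg,
        abs_of_nonneg (hφnn i z), abs_of_nonneg (hφnn i y)]
      linarith
  · have hb : φ i y = 0 := hφ0 i y hy
    have e2 : min (φ i x) (φ i y) * min (di i x y) 1 = 0 := by
      rw [ql_min0 hφnn hφ0 (Or.inr hy), zero_mul]
    have e3 : min (φ i y) (φ i z) * min (di i y z) 1 = 0 := by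
      rw [ql_min0 hφnn hφ0 (Or.inl hy), zero_mul]
    have h1 := qlRho_le (Zi := Zi) (di := di) hφnn hφ0 i x z
    have h2 : qlRho φ di i x y = φ i x := by
      unfold qlRho
      rw [e2, hb, sub_zero, add_zero, abs_of_nonneg (hφnn i x)]
    have h3 : qlRho φ di i y z = φ i z := by
      unfold qlRho
      rw [e3, hb, zero_sub, abs_neg, add_zero, abs_of_nonneg (hφnn i z)]
    rw [h2, h3]
    linarith

end QLAux
section QLAux2

variable {Z : Type*} {ι : Type*} {Zi : ι → Set Z} {di : ι → Z → Z → ℝ} {φ : ι → Z → ℝ}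
variable [DecidableEq ι]

private lemma qlD_eq_sum (hfin : ∀ x : Z, {i | φ i x ≠ 0}.Finite) (x y : Z)
    (Sf : Finset ι) (hS : (hfin x).toFinset ∪ (hfin y).toFinset ⊆ Sf) :
    qlD φ di hfin x y = ∑ i ∈ Sf, qlRho φ di i x y := by
  refine Finset.sum_subset hS ?_
  intro i _ hi
  rw [Finset.mem_union, Set.Finite.mem_toFinset, Set.Finite.mem_toFinset,
    Set.mem_setOf_eq, Set.mem_setOf_eq] at hi
  push_neg at hi
  exact qlRho_eq_zero hi.1 hi.2

private lemma qlD_nonneg (hφnn : ∀ i (x : Z), 0 ≤ φ i x)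
    (hφ0 : ∀ i x, x ∉ Zi i → φ i x = 0)
    (hnonneg : ∀ i, ∀ x ∈ Zi i, ∀ y ∈ Zi i, 0 ≤ di i x y)
    (hfin : ∀ x : Z, {i | φ i x ≠ 0}.Finite) (x y : Z) :
    0 ≤ qlD φ di hfin x y :=
  Finset.sum_nonneg fun i _ => qlRho_nonneg hφnn hφ0 hnonneg i x y

private lemma qlD_symm (hφnn : ∀ i (x : Z), 0 ≤ φ i x)
    (hφ0 : ∀ i x, x ∉ Zi i → φ i x = 0)
    (hsymm : ∀ i, ∀ x ∈ Zi i, ∀ y ∈ Zi i, di i x y = di i y x)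
    (hfin : ∀ x : Z, {i | φ i x ≠ 0}.Finite) (x y : Z) :
    qlD φ di hfin x y = qlD φ di hfin y x := by
  unfold qlD
  rw [Finset.union_comm]
  exact Finset.sum_congr rfl fun i _ => qlRho_symm hφnn hφ0 hsymm i x y

private lemma qlD_self (hφ0 : ∀ i x, x ∉ Zi i → φ i x = 0)
    (hzero : ∀ i, ∀ x ∈ Zi i, ∀ y ∈ Zi i, (di i x y = 0 ↔ x = y))
    (hfin : ∀ x : Z, {i | φ i x ≠ 0}.Finite) (x : Z) :
    qlD φ di hfin x x = 0 :=
  Finset.sum_eq_zero fun i _ => qlRho_self hφ0 hzero i x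

private lemma qlD_tri (hφnn : ∀ i (x : Z), 0 ≤ φ i x)
    (hφ0 : ∀ i x, x ∉ Zi i → φ i x = 0)
    (hnonneg : ∀ i, ∀ x ∈ Zi i, ∀ y ∈ Zi i, 0 ≤ di i x y)
    (htri : ∀ i, ∀ x ∈ Zi i, ∀ y ∈ Zi i, ∀ z ∈ Zi i, di i x z ≤ di i x y + di i y z)
    (hfin : ∀ x : Z, {i | φ i x ≠ 0}.Finite) (x y z : Z) :
    qlD φ di hfin x z ≤ qlD φ di hfin x y + qlD φ di hfin y z := by
  set Sf := (hfin x).toFinset ∪ (hfin y).toFinset ∪ (hfin z).toFinset with hSf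
  have s1 : (hfin x).toFinset ∪ (hfin z).toFinset ⊆ Sf :=
    Finset.union_subset (Finset.subset_union_left.trans Finset.subset_union_left)
      Finset.subset_union_right
  have s2 : (hfin x).toFinset ∪ (hfin y).toFinset ⊆ Sf := Finset.subset_union_left
  have s3 : (hfin y).toFinset ∪ (hfin z).toFinset ⊆ Sf :=
    Finset.union_subset (Finset.subset_union_right.trans Finset.subset_union_left)
      Finset.subset_union_right
  rw [qlD_eq_sum hfin x z Sf s1, qlD_eq_sum hfin x y Sf s2, qlD_eq_sum hfin y z Sf s3,
    ← Finset.sum_add_distrib]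
  exact Finset.sum_le_sum fun i _ => qlRho_tri hφnn hφ0 hnonneg htri i x y z

private lemma qlRho_le_qlD (hφnn : ∀ i (x : Z), 0 ≤ φ i x)
    (hφ0 : ∀ i x, x ∉ Zi i → φ i x = 0)
    (hnonneg : ∀ i, ∀ x ∈ Zi i, ∀ y ∈ Zi i, 0 ≤ di i x y)
    (hfin : ∀ x : Z, {i | φ i x ≠ 0}.Finite) (i : ι) (x y : Z) :
    qlRho φ di i x y ≤ qlD φ di hfin x y := by
  by_cases h : i ∈ (hfin x).toFinset ∪ (hfin y).toFinset
  · exact Finset.single_le_sum (fun j _ => qlRho_nonneg hφnn hφ0 hnonneg j x y) h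
  · rw [Finset.mem_union, Set.Finite.mem_toFinset, Set.Finite.mem_toFinset,
      Set.mem_setOf_eq, Set.mem_setOf_eq] at h
    push_neg at h
    rw [qlRho_eq_zero h.1 h.2]
    exact qlD_nonneg hφnn hφ0 hnonneg hfin x y

private lemma qlD_key (hφnn : ∀ i (x : Z), 0 ≤ φ i x)
    (hφ0 : ∀ i x, x ∉ Zi i → φ i x = 0)
    (hnonneg : ∀ i, ∀ x ∈ Zi i, ∀ y ∈ Zi i, 0 ≤ di i x y)
    (hzero : ∀ i, ∀ x ∈ Zi i, ∀ y ∈ Zi i, (di i x y = 0 ↔ x = y))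
    (hopen : ∀ i j, ∀ x ∈ Zi i ∩ Zi j, ∃ r > (0:ℝ), {y ∈ Zi i | di i x y < r} ⊆ Zi j)
    (hql : ∀ ε > (0:ℝ), ∃ δ > (0:ℝ), ∀ i j, ∀ z ∈ Zi i ∩ Zi j, ∃ r > (0:ℝ),
      ∀ x ∈ Zi i ∩ Zi j, ∀ y ∈ Zi i ∩ Zi j,
        di i z x < r → di i z y < r → di i x y < δ → di j x y < ε)
    (hfin : ∀ x : Z, {i | φ i x ≠ 0}.Finite)
    (hex : ∀ x : Z, ∃ j, 0 < φ j x) :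
    ∀ i z, z ∈ Zi i → ∀ ε > (0:ℝ), ∃ r > (0:ℝ),
      ∀ y, qlD φ di hfin z y < r → y ∈ Zi i ∧ di i z y < ε := by
  have hmemZ : ∀ i (x : Z), φ i x ≠ 0 → x ∈ Zi i := by
    intro i x h
    by_contra hx
    exact h (hφ0 i x hx)
  intro i z hz ε hε
  obtain ⟨δ, hδ0, hδ⟩ := hql ε hε
  obtain ⟨j, hj⟩ := hex z
  have hzj : z ∈ Zi j := hmemZ j z hj.ne'
  obtain ⟨r₀, hr₀0, hr₀⟩ := hδ j i z ⟨hzj, hz⟩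
  obtain ⟨r₁, hr₁0, hr₁⟩ := hopen j i z ⟨hzj, hz⟩
  set c := φ j z with hc
  set m := min (min r₀ r₁) (min δ 1) with hm
  have hm0 : 0 < m := lt_min (lt_min hr₀0 hr₁0) (lt_min hδ0 one_pos)
  have hm1 : m ≤ 1 := (min_le_right _ _).trans (min_le_right δ 1)
  refine ⟨c * m / 2, by positivity, ?_⟩
  intro y hDy
  have hρj : qlRho φ di j z y < c * m / 2 :=
    (qlRho_le_qlD hφnn hφ0 hnonneg hfin j z y).trans_lt hDy
  have h2nd : 0 ≤ min c (φ j y) * min (di j z y) 1 := by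
    by_cases hy : y ∈ Zi j
    · exact mul_nonneg (le_min (hφnn j z) (hφnn j y))
        (le_min (hnonneg j z hzj y hy) zero_le_one)
    · rw [ql_min0 (Zi := Zi) hφnn hφ0 (Or.inr hy), zero_mul]
  have hρeq : qlRho φ di j z y = |c - φ j y| + min c (φ j y) * min (di j z y) 1 := rfl
  have habs : |c - φ j y| < c * m / 2 := by
    rw [hρeq] at hρj; linarith
  have hcm : c * m / 2 ≤ c / 2 := by nlinarith
  have hfy : c / 2 < φ j y := by
    rcases abs_lt.1 habs with ⟨h1, h2⟩
    linarith
  have hfy0 : 0 < φ j y := lt_trans (by linarith) hfy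
  have hyj : y ∈ Zi j := hmemZ j y hfy0.ne'
  have he : min c (φ j y) * min (di j z y) 1 < c * m / 2 := by
    rw [hρeq] at hρj
    linarith [abs_nonneg (c - φ j y)]
  have hminc : c / 2 ≤ min c (φ j y) := le_min (by linarith) hfy.le
  have hd0 : 0 ≤ min (di j z y) 1 := le_min (hnonneg j z hzj y hyj) zero_le_one
  have hdj1 : min (di j z y) 1 < m := by
    have hkk := mul_le_mul_of_nonneg_right hminc hd0
    nlinarith
  have hdj : di j z y < m := by
    rcases lt_or_ge (di j z y) 1 with h | h
    · rwa [min_eq_left h.le] at hdj1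
    · rw [min_eq_right h] at hdj1; linarith
  have hyi : y ∈ Zi i := hr₁ ⟨hyj,
    hdj.trans_le ((min_le_left _ _).trans (min_le_right r₀ r₁))⟩
  refine ⟨hyi, ?_⟩
  have hdzz : di j z z = 0 := (hzero j z hzj z hzj).2 rfl
  exact hr₀ z ⟨hzj, hz⟩ y ⟨hyj, hyi⟩ (by rw [hdzz]; exact hr₀0)
    (hdj.trans_le ((min_le_left _ _).trans (min_le_left r₀ r₁)))
    (hdj.trans_le ((min_le_right _ _).trans (min_le_left δ 1)))

private lemma qlD_zero (hφnn : ∀ i (x : Z), 0 ≤ φ i x)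
    (hφ0 : ∀ i x, x ∉ Zi i → φ i x = 0)
    (hnonneg : ∀ i, ∀ x ∈ Zi i, ∀ y ∈ Zi i, 0 ≤ di i x y)
    (hzero : ∀ i, ∀ x ∈ Zi i, ∀ y ∈ Zi i, (di i x y = 0 ↔ x = y))
    (hfin : ∀ x : Z, {i | φ i x ≠ 0}.Finite)
    (hex : ∀ x : Z, ∃ j, 0 < φ j x) (x y : Z)
    (hD : qlD φ di hfin x y = 0) : x = y := by
  have hmemZ : ∀ i (x : Z), φ i x ≠ 0 → x ∈ Zi i := by
    intro i x h
    by_contra hx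
    exact h (hφ0 i x hx)
  obtain ⟨j, hj⟩ := hex x
  have hxj : x ∈ Zi j := hmemZ j x hj.ne'
  have hρ0 : qlRho φ di j x y = 0 :=
    le_antisymm (hD ▸ qlRho_le_qlD hφnn hφ0 hnonneg hfin j x y)
      (qlRho_nonneg hφnn hφ0 hnonneg j x y)
  have hyj : y ∈ Zi j := by
    by_contra hy
    have h1 : φ j y = 0 := hφ0 j y hy
    have hpe : min (φ j x) (φ j y) * min (di j x y) 1 = 0 := by
      rw [ql_min0 (Zi := Zi) hφnn hφ0 (Or.inr hy), zero_mul]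
    have : qlRho φ di j x y = φ j x := by
      unfold qlRho
      rw [hpe, h1, sub_zero, add_zero, abs_of_nonneg (hφnn j x)]
    rw [this] at hρ0
    exact hj.ne' hρ0
  have h2nd : 0 ≤ min (φ j x) (φ j y) * min (di j x y) 1 :=
    mul_nonneg (le_min (hφnn j x) (hφnn j y))
      (le_min (hnonneg j x hxj y hyj) zero_le_one)
  have hρeq : qlRho φ di j x y
      = |φ j x - φ j y| + min (φ j x) (φ j y) * min (di j x y) 1 := rfl
  rw [hρeq] at hρ0
  have habs : |φ j x - φ j y| = 0 := le_antisymm (by linarith) (abs_nonneg _)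
  have hfy : φ j y = φ j x := by
    have := abs_eq_zero.1 habs; linarith
  have hmul : min (φ j x) (φ j y) * min (di j x y) 1 = 0 := by linarith
  have hminpos : 0 < min (φ j x) (φ j y) := by
    rw [hfy]; exact lt_min hj hj
  have hd1 : min (di j x y) 1 = 0 := by
    rcases mul_eq_zero.1 hmul with h | h
    · exact absurd h hminpos.ne'
    · exact h
  have hd : di j x y = 0 := by
    rcases lt_or_ge (di j x y) 1 with h | h
    · rwa [min_eq_left h.le] at hd1
    · rw [min_eq_right h] at hd1; norm_num at hd1
  exact (hzero j x hxj y hyj).1 hd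

private lemma qlD_small [TopologicalSpace Z]
    (hφnn : ∀ i (x : Z), 0 ≤ φ i x)
    (hφ0 : ∀ i x, x ∉ Zi i → φ i x = 0)
    (hnonneg : ∀ i, ∀ x ∈ Zi i, ∀ y ∈ Zi i, 0 ≤ di i x y)
    (hzero : ∀ i, ∀ x ∈ Zi i, ∀ y ∈ Zi i, (di i x y = 0 ↔ x = y))
    (hfin : ∀ x : Z, {i | φ i x ≠ 0}.Finite)
    (hφ1 : ∀ i (x : Z), φ i x ≤ 1)
    (hcont : ∀ i, Continuous (φ i))
    (hlf : LocallyFinite fun i => Function.support (φ i))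
    (hball : ∀ i (z : Z) (s : ℝ), z ∈ Zi i → IsOpen {y | y ∈ Zi i ∧ di i z y < s}) :
    ∀ (z : Z), ∀ s > (0:ℝ), ∃ U : Set Z, IsOpen U ∧ z ∈ U ∧
      ∀ y ∈ U, qlD φ di hfin z y < s := by
  classical
  intro z s hs
  obtain ⟨W₀, hW₀n, hWfin⟩ := hlf z
  obtain ⟨W, hWsub, hWopen, hzW⟩ := mem_nhds_iff.1 hW₀n
  set F : Finset ι := hWfin.toFinset with hF
  set s' := s / (2 * F.card + 2) with hs'
  have hs'0 : 0 < s' := by positivity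
  refine ⟨W ∩ ⋂ i ∈ F, ({y | |φ i y - φ i z| < s'} ∩
    (if z ∈ Zi i then {y | y ∈ Zi i ∧ di i z y < s'} else Set.univ)), ?_, ?_, ?_⟩
  · refine hWopen.inter (isOpen_biInter_finset fun i _ => ?_)
    refine IsOpen.inter ?_ ?_
    · exact isOpen_lt (((hcont i).sub continuous_const).abs) continuous_const
    · split_ifs with hzi
      · exact hball i z s' hzi
      · exact isOpen_univ
  · refine ⟨hzW, Set.mem_iInter₂.2 fun i _ => ⟨?_, ?_⟩⟩
    · simp [hs'0]
    · split_ifs with hzi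
      · exact ⟨hzi, by rw [(hzero i z hzi z hzi).2 rfl]; exact hs'0⟩
      · exact Set.mem_univ z
  · intro y hy
    obtain ⟨hyW, hyI⟩ := hy
    have hyI' := Set.mem_iInter₂.1 hyI
    have hsub : (hfin z).toFinset ∪ (hfin y).toFinset ⊆ F := by
      intro i hi
      rw [hF, Set.Finite.mem_toFinset]
      rcases Finset.mem_union.1 hi with h | h
      · rw [Set.Finite.mem_toFinset, Set.mem_setOf_eq] at h
        exact ⟨z, Function.mem_support.2 h, hWsub hzW⟩
      · rw [Set.Finite.mem_toFinset, Set.mem_setOf_eq] at h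
        exact ⟨y, Function.mem_support.2 h, hWsub hyW⟩
    rw [qlD_eq_sum hfin z y F hsub]
    have hterm : ∀ i ∈ F, qlRho φ di i z y ≤ 2 * s' := by
      intro i hiF
      obtain ⟨hV, hG⟩ := hyI' i hiF
      have hV' : |φ i z - φ i y| < s' := by
        rw [abs_sub_comm]; exact hV
      by_cases hzi : z ∈ Zi i
      · rw [if_pos hzi] at hG
        obtain ⟨hyZ, hdi⟩ := hG
        have p1 : min (φ i z) (φ i y) ≤ 1 := (min_le_left _ _).trans (hφ1 i z)
        have p2 : 0 ≤ min (φ i z) (φ i y) := le_min (hφnn i z) (hφnn i y)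
        have p3 : min (di i z y) 1 ≤ s' := (min_le_left _ _).trans hdi.le
        have p4 : 0 ≤ min (di i z y) 1 := le_min (hnonneg i z hzi y hyZ) zero_le_one
        have hρeq : qlRho φ di i z y
            = |φ i z - φ i y| + min (φ i z) (φ i y) * min (di i z y) 1 := rfl
        rw [hρeq]
        nlinarith
      · have h1 : φ i z = 0 := hφ0 i z hzi
        have hpe : min (φ i z) (φ i y) * min (di i z y) 1 = 0 := by
          rw [ql_min0 (Zi := Zi) hφnn hφ0 (Or.inl hzi), zero_mul]
        have hρeq : qlRho φ di i z y = φ i y := by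
          unfold qlRho
          rw [hpe, h1, zero_sub, abs_neg, add_zero, abs_of_nonneg (hφnn i y)]
        rw [hρeq]
        rw [h1, zero_sub, abs_neg, abs_of_nonneg (hφnn i y)] at hV'
        linarith
    have hsum : ∑ i ∈ F, qlRho φ di i z y ≤ F.card * (2 * s') := by
      have := Finset.sum_le_card_nsmul F (fun i => qlRho φ di i z y) (2 * s') hterm
      rwa [nsmul_eq_mul] at this
    have hlt : (F.card : ℝ) * (2 * s') < s := by
      have hc : (0:ℝ) ≤ (F.card : ℝ) := Nat.cast_nonneg _
      have h2 : (0:ℝ) < 2 * (F.card : ℝ) + 2 := by positivity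
      have key : (2 * (F.card : ℝ) + 2) * s' = s := by
        rw [hs']; field_simp
      nlinarith [hs'0]
    linarith

end QLAux2
/-- A Hausdorff paracompact quasi-local metric space `(Z, 𝔔)` — given by a
cover `{(Z_i, d_i)}` of `Z` by quasi-locally equal metric spaces, with the
topology generated by all the metric balls — is induced by a metric: there is a
metric `D` on `Z` inducing the same topology such that `{(Z, D)}` together with
the given family is again a cover of `Z` by quasi-locally equal metric
spaces. -/
theorem hausdorff_paracompact_quasiLocal_metric_space_is_metrizable
    {Z : Type*} {ι : Type*} (Zi : ι → Set Z) (di : ι → Z → Z → ℝ)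
    (hcover : (⋃ i, Zi i) = Set.univ)
    -- each `d_i` is a metric on `Z_i`
    (hnonneg : ∀ i, ∀ x ∈ Zi i, ∀ y ∈ Zi i, 0 ≤ di i x y)
    (hsymm : ∀ i, ∀ x ∈ Zi i, ∀ y ∈ Zi i, di i x y = di i y x)
    (hzero : ∀ i, ∀ x ∈ Zi i, ∀ y ∈ Zi i, (di i x y = 0 ↔ x = y))
    (htri : ∀ i, ∀ x ∈ Zi i, ∀ y ∈ Zi i, ∀ z ∈ Zi i,
      di i x z ≤ di i x y + di i y z)
    -- overlaps are open in each of the metric spaces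
    (hopen : ∀ i j, ∀ x ∈ Zi i ∩ Zi j, ∃ r > (0:ℝ),
      {y ∈ Zi i | di i x y < r} ⊆ Zi j)
    -- the metrics are quasi-locally equal on the overlaps
    (hql : ∀ ε > (0:ℝ), ∃ δ > (0:ℝ), ∀ i j, ∀ z ∈ Zi i ∩ Zi j, ∃ r > (0:ℝ),
      ∀ x ∈ Zi i ∩ Zi j, ∀ y ∈ Zi i ∩ Zi j,
        di i z x < r → di i z y < r → di i x y < δ → di j x y < ε) :
    ∀ t : TopologicalSpace Z,
      t = TopologicalSpace.generateFrom
        {B | ∃ i, ∃ x ∈ Zi i, ∃ r : ℝ, B = {y ∈ Zi i | di i x y < r}} →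
      @T2Space Z t → @ParacompactSpace Z t →
      ∃ D : Z → Z → ℝ,
        (∀ x y : Z, 0 ≤ D x y) ∧
        (∀ x y : Z, D x y = D y x) ∧
        (∀ x y : Z, (D x y = 0 ↔ x = y)) ∧
        (∀ x y z : Z, D x z ≤ D x y + D y z) ∧
        -- `D` induces the topology of `(Z, 𝔔)`
        (t = TopologicalSpace.generateFrom
          {B | ∃ x : Z, ∃ r : ℝ, B = {y | D x y < r}}) ∧
        -- `{(Z, D)}` together with the family is a cover of `Z` by
        -- quasi-locally equal metric spaces
        (∀ ε > (0:ℝ), ∃ δ > (0:ℝ), ∀ i, ∀ z ∈ Zi i, ∃ r > (0:ℝ),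
          ∀ x : Z, ∀ y : Z, D z x < r → D z y < r →
            x ∈ Zi i ∧ y ∈ Zi i ∧
            (D x y < δ → di i x y < ε) ∧ (di i x y < δ → D x y < ε)) := by
  classical
  intro t ht hT2 hPara
  subst ht
  letI : TopologicalSpace Z := TopologicalSpace.generateFrom
        {B | ∃ i, ∃ x ∈ Zi i, ∃ r : ℝ, B = {y ∈ Zi i | di i x y < r}}
  haveI : T2Space Z := hT2
  haveI : ParacompactSpace Z := hPara
  haveI : NormalSpace Z := inferInstance
  have hball : ∀ i (z : Z) (s : ℝ), z ∈ Zi i →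
      IsOpen {y | y ∈ Zi i ∧ di i z y < s} := fun i z s hz =>
    TopologicalSpace.isOpen_generateFrom_of_mem ⟨i, z, hz, s, rfl⟩
  have hZopen : ∀ i, IsOpen (Zi i) := by
    intro i
    rw [isOpen_iff_forall_mem_open]
    intro z hz
    refine ⟨{y | y ∈ Zi i ∧ di i z y < 1}, fun y hy => hy.1, hball i z 1 hz, hz, ?_⟩
    exact ((hzero i z hz z hz).2 rfl).le.trans_lt one_pos
  obtain ⟨f, hf⟩ := PartitionOfUnity.exists_isSubordinate (s := univ) isClosed_univ Zi hZopen
      (by rw [hcover])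
  have hφnn : ∀ i (x : Z), 0 ≤ f i x := fun i x => f.nonneg i x
  have hφ0 : ∀ i (x : Z), x ∉ Zi i → f i x = 0 := by
    intro i x hx
    by_contra h
    exact hx (hf i (subset_tsupport _ (Function.mem_support.2 h)))
  have hfin : ∀ x : Z, {i | f i x ≠ 0}.Finite := fun x => f.locallyFinite.point_finite x
  have hφ1 : ∀ i (x : Z), f i x ≤ 1 := by
    intro i x
    have h := single_le_finsum (f := fun j => f j x) i (hfin x) (fun j => f.nonneg j x)
    rwa [f.sum_eq_one (mem_univ x)] at h
  have hex : ∀ x : Z, ∃ j, 0 < f j x := by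
    intro x
    by_contra h
    push_neg at h
    have h0 : ∑ᶠ j, f j x = 0 :=
      finsum_eq_zero_of_forall_eq_zero fun j => le_antisymm (h j) (f.nonneg j x)
    rw [f.sum_eq_one (mem_univ x)] at h0
    norm_num at h0
  have hcont : ∀ i, Continuous (fun x : Z => f i x) := fun i => (f i).continuous
  have hlf : LocallyFinite fun i => Function.support (fun x : Z => f i x) :=
    f.locallyFinite
  set D : Z → Z → ℝ := qlD (fun i x => f i x) di hfin with hDdef
  have hDnn : ∀ x y : Z, 0 ≤ D x y := qlD_nonneg hφnn hφ0 hnonneg hfin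
  have hDsymm : ∀ x y : Z, D x y = D y x := qlD_symm hφnn hφ0 hsymm hfin
  have hDself : ∀ x : Z, D x x = 0 := qlD_self hφ0 hzero hfin
  have hDtri : ∀ x y z : Z, D x z ≤ D x y + D y z := qlD_tri hφnn hφ0 hnonneg htri hfin
  have hDzero : ∀ x y : Z, D x y = 0 → x = y :=
    qlD_zero hφnn hφ0 hnonneg hzero hfin hex
  have hkey : ∀ i z, z ∈ Zi i → ∀ ε > (0:ℝ), ∃ r > (0:ℝ),
      ∀ y, D z y < r → y ∈ Zi i ∧ di i z y < ε :=
    qlD_key hφnn hφ0 hnonneg hzero hopen hql hfin hex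
  have hsmall : ∀ (z : Z), ∀ s > (0:ℝ), ∃ U : Set Z, IsOpen U ∧ z ∈ U ∧
      ∀ y ∈ U, D z y < s :=
    qlD_small hφnn hφ0 hnonneg hzero hfin hφ1 hcont hlf hball
  refine ⟨D, hDnn, hDsymm,
    fun x y => ⟨hDzero x y, fun h => by rw [h]; exact hDself y⟩, hDtri, ?_, ?_⟩
  · -- topology equality
    refine le_antisymm ?_ ?_
    · refine TopologicalSpace.le_generateFrom_iff_subset_isOpen.2 ?_
      rintro B ⟨x, r, rfl⟩
      simp only [Set.mem_setOf_eq]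
      rw [isOpen_iff_forall_mem_open]
      intro y₀ hy₀
      have hy₀' : D x y₀ < r := hy₀
      obtain ⟨U, hUopen, hy₀U, hUsmall⟩ := hsmall y₀ (r - D x y₀) (by linarith)
      refine ⟨U, ?_, hUopen, hy₀U⟩
      intro y hyU
      have h1 := hUsmall y hyU
      have h2 := hDtri x y₀ y
      show D x y < r
      linarith
    · refine TopologicalSpace.le_generateFrom_iff_subset_isOpen.2 ?_
      rintro B ⟨i, x₀, hx₀, r, rfl⟩
      simp only [Set.mem_setOf_eq]
      refine (@isOpen_iff_forall_mem_open Z (TopologicalSpace.generateFrom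
        {B | ∃ x : Z, ∃ r : ℝ, B = {y | D x y < r}}) _).2 ?_
      rintro y₀ ⟨hy₀Z, hy₀d⟩
      obtain ⟨rD, hrD0, hrD⟩ := hkey i y₀ hy₀Z (r - di i x₀ y₀) (by linarith)
      refine ⟨{y | D y₀ y < rD}, ?_, ?_, ?_⟩
      · intro y hy
        obtain ⟨hyZ, hyd⟩ := hrD y hy
        exact ⟨hyZ, (htri i x₀ hx₀ y₀ hy₀Z y hyZ).trans_lt (by linarith)⟩
      · exact TopologicalSpace.isOpen_generateFrom_of_mem ⟨y₀, rD, rfl⟩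
      · show D y₀ y₀ < rD
        rw [hDself y₀]; exact hrD0
  · -- quasi-local equality of `D` with the family
    intro ε hε
    refine ⟨1, one_pos, ?_⟩
    intro i z hz
    obtain ⟨r₀, hr₀0, hr₀⟩ := hkey i z hz (ε / 2) (by linarith)
    refine ⟨min r₀ (ε / 2), lt_min hr₀0 (by linarith), ?_⟩
    intro x y hx hy
    obtain ⟨hxZ, hxd⟩ := hr₀ x (hx.trans_le (min_le_left _ _))
    obtain ⟨hyZ, hyd⟩ := hr₀ y (hy.trans_le (min_le_left _ _))
    refine ⟨hxZ, hyZ, fun _ => ?_, fun _ => ?_⟩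
    · have h1 : di i x y ≤ di i x z + di i z y := htri i x hxZ z hz y hyZ
      have h2 : di i x z = di i z x := hsymm i x hxZ z hz
      linarith
    · have h1 : D x y ≤ D x z + D z y := hDtri x z y
      have h2 : D x z = D z x := hDsymm x z
      have h3 : D z x < ε / 2 := hx.trans_le (min_le_right _ _)
      have h4 : D z y < ε / 2 := hy.trans_le (min_le_right _ _)
      linarith
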